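/- With notation as above (G a group, e identity, words over G, fusion product sets A ∘ B), let E_3 be the set of words starting with e that contain at least one letter different from e, and let g ∈ G, g ≠ e. Then {(g)} ∘ E_3 ∘ {(g^{-1})} ⊆ G_1, where G_1 is the set of words starting with a letter ≠ e. -/

import Mathlib

/-- Involution on words: reverse and invert letters. -/
def wordInv {G : Type*} [Group G] (w : List G) : List G := (w.map (·⁻¹)).reverse

/-- Fusion of two words: multiply the last letter of `u` with the first letter of `v`. -/
def fuse {G : Type*} [Group G] (u v : List G) : List G :=
  match u.getLast?, v with
  | some a, b :: t => u.dropLast ++ (a * b) :: t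
  | _, _ => u ++ v

/-- `γ` appears in the fusion-rule expansion of `b_x ⊗ b_y`, i.e. there is a
decomposition `x = u·t`, `y = t̄·v` with `γ = u·v` or (for `u, v` nonempty) `γ = u∗v`. -/
def inProd {G : Type*} [Group G] (x y γ : List G) : Prop :=
  ∃ u t v : List G, x = u ++ t ∧ y = wordInv t ++ v ∧
    (γ = u ++ v ∨ (u ≠ [] ∧ v ≠ [] ∧ γ = fuse u v))

/-- The product set `A ∘ B` of two sets of words. -/
def circ {G : Type*} [Group G] (A B : Set (List G)) : Set (List G) :=
  {γ | ∃ x ∈ A, ∃ y ∈ B, inProd x y γ}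

/-- Words starting with `e`, together with the empty word. -/
def E1 (G : Type*) [Group G] : Set (List G) := {w | w = [] ∨ w.head? = some 1}

/-- Words starting with a letter `≠ e`. -/
def G1 (G : Type*) [Group G] : Set (List G) := {w | ∃ a, w.head? = some a ∧ a ≠ 1}

/-- Words starting and ending with a letter `≠ e`. -/
def G2 (G : Type*) [Group G] : Set (List G) :=
  {w | (∃ a, w.head? = some a ∧ a ≠ 1) ∧ (∃ b, w.getLast? = some b ∧ b ≠ 1)}

/-- Words starting with `e` that contain at least one letter `≠ e`. -/
def E3 (G : Type*) [Group G] : Set (List G) := {w | w.head? = some 1 ∧ ∃ a ∈ w, a ≠ 1}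

lemma head?_fuse_cons {G : Type*} [Group G] (a : G) (u v : List G) (hu : u ≠ []) :
    (fuse (a :: u) v).head? = some a := by
  unfold fuse
  cases v with
  | nil => cases h : (a::u).getLast? <;> simp
  | cons b t =>
    rw [List.getLast?_eq_getLast (l := a :: u) (by simp)]
    simp [List.dropLast_cons_of_ne_nil hu]

lemma inner_shape {G : Type*} [Group G] (g : G) (hg : g ≠ 1) (γ : List G)
    (h : γ ∈ circ {[g]} (E3 G)) : ∃ w, w ≠ [] ∧ γ = g :: w := by
  obtain ⟨x, hx, y, hy, u, t, v, h1, h2, h3⟩ := h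
  rw [Set.mem_singleton_iff] at hx
  subst hx
  obtain ⟨hyhead, a, ha, hane⟩ := hy
  match u, t, h1 with
  | [], [g'], h1 =>
    simp at h1
    subst h1
    rw [h2] at hyhead
    simp [wordInv] at hyhead
    exact absurd hyhead hg
  | [g'], [], h1 =>
    simp at h1
    subst h1
    simp [wordInv] at h2
    subst h2
    rcases h3 with h3 | ⟨_, hv, h3⟩
    · refine ⟨y, ?_, by simpa using h3⟩
      rintro rfl; simp at hyhead
    · match y, hyhead with
      | b :: t'', hb =>
        simp at hb
        subst hb
        simp [fuse] at h3
        refine ⟨t'', ?_, h3⟩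
        rintro rfl
        simp at ha
        subst ha
        exact hane rfl


/-- Lemma 3.8 (1): for `g ≠ e`, `{(g)} ∘ E_3 ∘ {(g⁻¹)} ⊆ G_1`. -/
theorem conj_E3_subset_G1 (G : Type*) [Group G] (g : G) (hg : g ≠ 1) :
    circ (circ {[g]} (E3 G)) {[g⁻¹]} ⊆ G1 G := by

  intro δ hδ
  obtain ⟨x, hx, y, hy, u, t, v, h1, h2, h3⟩ := hδ
  rw [Set.mem_singleton_iff] at hy
  subst hy
  obtain ⟨w, hw, rfl⟩ := inner_shape g hg x hx
  refine ⟨g, ?_, hg⟩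
  match t with
  | [] =>
    simp [wordInv] at h2
    subst h2
    rw [List.append_nil] at h1
    subst h1
    rcases h3 with rfl | ⟨hu, _, rfl⟩
    · simp
    · exact head?_fuse_cons g w [g⁻¹] hw
  | [c] =>
    simp [wordInv] at h2
    obtain ⟨hc, rfl⟩ := h2
    rcases h3 with rfl | ⟨_, hv, _⟩
    · match u, h1 with
      | [], h1 => simp at h1; exact absurd h1.2 hw
      | a :: u', h1 =>
        simp at h1
        simp [h1.1]
    · exact absurd rfl hv
  | c :: d :: t' =>
    have := congrArg List.length h2
    simp [wordInv] at this
    omega
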